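/- If (a,b,c) is a primitive solution of a² + 3b² = c² and p is a prime dividing c, then either p = 2 or there exist integers u, v with p = u² + 3v². -/

import Mathlib

/-- Reduction of an integer mod `k` to a representative of small absolute value. -/
lemma small_rep (k : ℤ) (hk : 0 < k) (x : ℤ) :
    ∃ x' : ℤ, (k ∣ x - x') ∧ -(k/2) ≤ x' ∧ x' ≤ k - 1 - k/2 := by
  refine ⟨(x + k/2) % k - k/2, ⟨(x + k/2) / k, by rw [Int.emod_def]; ring⟩, ?_, ?_⟩
  · have := Int.emod_nonneg (x + k/2) (ne_of_gt hk)
    omega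
  · have := Int.emod_lt_of_pos (x + k/2) hk
    omega

/-- Parity: `x² + 3y²` has the same parity as `x + y`. -/
lemma parity_aux (x y : ℤ) : (2:ℤ) ∣ (x^2 + 3*y^2) - (x + y) := by
  have h1 : (2:ℤ) ∣ x^2 - x := by
    rcases Int.even_or_odd x with ⟨t,ht⟩|⟨t,ht⟩
    · exact ⟨2*t^2 - t, by subst ht; ring⟩
    · exact ⟨2*t^2 + t, by subst ht; ring⟩
  have h2 : (2:ℤ) ∣ 3*y^2 - y := by
    rcases Int.even_or_odd y with ⟨t,ht⟩|⟨t,ht⟩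
    · exact ⟨6*t^2 - t, by subst ht; ring⟩
    · exact ⟨6*t^2 + 5*t + 1, by subst ht; ring⟩
  obtain ⟨s, hs⟩ := h1; obtain ⟨t, ht⟩ := h2
  exact ⟨s + t, by linarith⟩

set_option maxHeartbeats 1000000 in
/-- Descent: if some multiple `k*p` (with `0 < k < p`) of an odd prime `p`
is of the form `x² + 3y²`, then `p` itself is. -/
lemma descent (p : ℕ) (hp : Nat.Prime p) (hodd : p % 2 = 1) :
    ∀ k : ℕ, 0 < k → k < p → ∀ x y : ℤ, x^2 + 3*y^2 = (k : ℤ) * p →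
      ∃ u v : ℤ, (p : ℤ) = u^2 + 3*v^2 := by
  intro k
  induction k using Nat.strong_induction_on with
  | _ k IH =>
  intro hk0 hkp x y hxy
  rcases Nat.lt_or_ge k 2 with h1 | h1
  · -- k = 1
    have hk1 : k = 1 := by omega
    subst hk1
    exact ⟨x, y, by push_cast at hxy ⊢; linarith⟩
  -- k ≥ 2
  have hcop : Nat.Coprime p 4 := by
    refine hp.coprime_iff_not_dvd.mpr (fun hd => ?_)
    have hpd : p ∣ 2 := hp.dvd_of_dvd_pow (n := 2) (by norm_num [pow_two]; exact hd)
    have := Nat.le_of_dvd (by norm_num) hpd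
    have := hp.two_le
    omega
  have step : ∀ u w : ℤ, 4*(u^2 + 3*w^2) = (k:ℤ) * p → ∃ u v : ℤ, (p : ℤ) = u^2 + 3*v^2 := by
    intro u w huw
    have h4 : (4:ℕ) ∣ k * p := by
      have : (4:ℤ) ∣ ((k * p : ℕ) : ℤ) := ⟨u^2 + 3*w^2, by push_cast; linarith⟩
      exact_mod_cast this
    have h4k : 4 ∣ k := (Nat.Coprime.dvd_of_dvd_mul_right (Nat.coprime_comm.mp hcop) h4)
    obtain ⟨m, hm⟩ := h4k
    have hm0 : 0 < m := by omega
    have hmk : m < k := by omega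
    refine IH m hmk hm0 (by omega) u w ?_
    have : (4:ℤ) * (u^2 + 3*w^2) = 4 * ((m:ℤ) * p) := by
      rw [huw]; push_cast [hm]; ring
    linarith
  rcases Nat.even_or_odd k with hke | hko
  · -- k even : x ≡ y (mod 2)
    have hkpe : (2:ℤ) ∣ x^2 + 3*y^2 := by
      obtain ⟨m, hm⟩ := hke
      exact ⟨(m:ℤ) * p, by rw [hxy]; push_cast [hm]; ring⟩
    obtain ⟨s, hs⟩ := hkpe
    obtain ⟨t, ht⟩ := parity_aux x y
    have hxy2 : (2:ℤ) ∣ x - y := ⟨s - t - y, by linarith⟩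
    rcases Int.even_or_odd x with ⟨r,hr⟩ | ⟨r,hr⟩
    · -- x, y both even
      obtain ⟨w, hw⟩ := hxy2
      refine step r (r - w) ?_
      rw [← hxy]
      have hy : y = 2*r - 2*w := by omega
      rw [hy, hr]; ring
    · -- x, y both odd
      obtain ⟨w, hw⟩ := hxy2
      have hy : y = 2*r + 1 - 2*w := by omega
      -- 4 ∣ x - y or 4 ∣ x + y
      have h4 : (4:ℤ) ∣ x - y ∨ (4:ℤ) ∣ x + y := by
        rcases Int.even_or_odd w with ⟨e,he⟩ | ⟨e,he⟩
        · left; exact ⟨e, by omega⟩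
        · right; exact ⟨r - e, by omega⟩
      rcases h4 with ⟨e, he⟩ | ⟨e, he⟩
      · -- x - y = 4e, x + 3y = 4(e + y)
        refine step (e + y) e ?_
        have hx : x = y + 4*e := by linarith
        rw [← hxy, hx]; ring
      · -- x + y = 4e, x - 3y = 4(e - y)
        refine step (e - y) e ?_
        have hx : x = 4*e - y := by linarith
        rw [← hxy, hx]; ring
  · -- k odd, k ≥ 3 : Thue-style reduction
    obtain ⟨j, hj⟩ := hko
    have hkZ : (k:ℤ) = 2*((k:ℤ)/2) + 1 := by omega
    have hkpos : (0:ℤ) < k := by exact_mod_cast hk0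
    obtain ⟨x', hdx, hx1, hx2⟩ := small_rep (k:ℤ) hkpos x
    obtain ⟨y', hdy, hy1, hy2⟩ := small_rep (k:ℤ) hkpos y
    set h2 : ℤ := (k:ℤ)/2 with hh2
    have hx'b : 4*x'^2 ≤ ((k:ℤ) - 1)^2 := by nlinarith
    have hy'b : 4*y'^2 ≤ ((k:ℤ) - 1)^2 := by nlinarith
    have h0 : (k:ℤ) ∣ x^2 + 3*y^2 := hxy ▸ Dvd.intro _ rfl
    have hNd : (k:ℤ) ∣ x'^2 + 3*y'^2 := by
      have he : x'^2 + 3*y'^2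
          = (x^2 + 3*y^2) - ((x - x')*(x + x') + 3*((y - y')*(y + y'))) := by ring
      rw [he]
      exact dvd_sub h0 (dvd_add (hdx.mul_right _) ((hdy.mul_right _).mul_left 3))
    obtain ⟨k', hk'⟩ := hNd
    have hNnn : (0:ℤ) ≤ (k:ℤ) * k' := by rw [← hk']; positivity
    have hk'0 : 0 ≤ k' := nonneg_of_mul_nonneg_right hNnn hkpos
    have hk'k : k' < (k:ℤ) := by
      have hlt : (k:ℤ) * k' < (k:ℤ) * (k:ℤ) := by nlinarith [hk', hx'b, hy'b]
      exact lt_of_mul_lt_mul_left hlt (le_of_lt hkpos)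
    rcases eq_or_lt_of_le hk'0 with hk'z | hk'pos
    · -- k' = 0 : then k ∣ x, k ∣ y, impossible
      exfalso
      have hN0 : x'^2 + 3*y'^2 = 0 := by rw [hk', ← hk'z]; ring
      have hx'0 : x' = 0 := by
        have h1 : x'^2 = 0 := le_antisymm (by nlinarith [sq_nonneg y']) (sq_nonneg x')
        exact pow_eq_zero_iff (two_ne_zero) |>.mp h1
      have hy'0 : y' = 0 := by
        have h1 : y'^2 = 0 := le_antisymm (by nlinarith [sq_nonneg x']) (sq_nonneg y')
        exact pow_eq_zero_iff (two_ne_zero) |>.mp h1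
      rw [hx'0, sub_zero] at hdx
      rw [hy'0, sub_zero] at hdy
      have hsq : (k:ℤ)*(k:ℤ) ∣ (k:ℤ) * p := by
        rw [← hxy]
        obtain ⟨u, hu⟩ := hdx; obtain ⟨v, hv⟩ := hdy
        exact ⟨u^2 + 3*v^2, by rw [hu, hv]; ring⟩
      have hkp : (k:ℤ) ∣ (p:ℤ) := by
        obtain ⟨d, hd⟩ := hsq
        refine ⟨d, mul_left_cancel₀ (ne_of_gt hkpos) ?_⟩
        rw [hd]; ring
      have : (k:ℕ) ∣ p := by exact_mod_cast hkp
      rcases (Nat.Prime.eq_one_or_self_of_dvd hp k this) with h | h <;> omega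
    · -- 0 < k' < k : produce a representation of k' * p
      set A : ℤ := x*x' + 3*y*y' with hA
      set B : ℤ := x*y' - x'*y with hB
      have hid : A^2 + 3*B^2 = (x^2 + 3*y^2) * (x'^2 + 3*y'^2) := by rw [hA, hB]; ring
      have hdA : (k:ℤ) ∣ A := by
        have he : A = (x^2 + 3*y^2) - (x*(x - x') + 3*(y*(y - y'))) := by rw [hA]; ring
        rw [he]
        exact dvd_sub h0 (dvd_add (hdx.mul_left x) ((hdy.mul_left y).mul_left 3))
      have hdB : (k:ℤ) ∣ B := by
        have he : B = y*(x - x') - x*(y - y') := by rw [hB]; ring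
        rw [he]
        exact dvd_sub (hdx.mul_left y) (hdy.mul_left x)
      obtain ⟨A', hA'⟩ := hdA
      obtain ⟨B', hB'⟩ := hdB
      have hrep : A'^2 + 3*B'^2 = k' * p := by
        have hsq : (k:ℤ)^2 * (A'^2 + 3*B'^2) = (k:ℤ)^2 * (k' * p) := by
          have h5 : ((k:ℤ)*A')^2 + 3*((k:ℤ)*B')^2 = ((k:ℤ)*p) * ((k:ℤ)*k') := by
            rw [← hA', ← hB', hid, hxy, hk']
          linear_combination h5
        have hk2 : ((k:ℤ)^2) ≠ 0 := by positivity
        exact mul_left_cancel₀ hk2 hsq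
      set m : ℕ := k'.toNat with hm
      have hmk' : (m:ℤ) = k' := Int.toNat_of_nonneg hk'0
      have hmk : m < k := by omega
      have hm0 : 0 < m := by omega
      refine IH m hmk hm0 (by omega) A' B' ?_
      rw [hmk']; exact hrep

theorem stmt_1 (a b c : ℤ) (hc : 0 < c) (h : a^2 + 3*b^2 = c^2)
    (hprim : Int.gcd a b = 1) (p : ℕ) (hp : Nat.Prime p) (hpc : (p : ℤ) ∣ c) :
    p = 2 ∨ ∃ u v : ℤ, (p : ℤ) = u^2 + 3*v^2 := by
  by_cases hp2 : p = 2
  · exact Or.inl hp2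
  right
  have hodd : p % 2 = 1 := Nat.odd_iff.mp (hp.odd_of_ne_two hp2)
  have hp2le := hp.two_le
  have hp3 : 3 ≤ p := by omega
  haveI : Fact p.Prime := ⟨hp⟩
  have hpZ : Prime (p:ℤ) := Nat.prime_iff_prime_int.mp hp
  -- p does not divide b
  have hpb : ¬ (p:ℤ) ∣ b := by
    intro hb
    have ha2 : (p:ℤ) ∣ a^2 := by
      have he : a^2 = c^2 - 3*b^2 := by linarith
      rw [he]
      exact dvd_sub (dvd_pow hpc two_ne_zero) ((dvd_pow hb two_ne_zero).mul_left 3)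
    have ha : (p:ℤ) ∣ a := hpZ.dvd_of_dvd_pow ha2
    have h1 : (p:ℤ) ∣ (Int.gcd a b : ℤ) := Int.dvd_coe_gcd ha hb
    rw [hprim] at h1
    have := Int.le_of_dvd one_pos h1
    omega
  -- -3 is a square mod p
  have hbne : ((b:ZMod p)) ≠ 0 := fun h0 => hpb ((ZMod.intCast_zmod_eq_zero_iff_dvd b p).mp h0)
  have hc0 : ((c:ZMod p)) = 0 := (ZMod.intCast_zmod_eq_zero_iff_dvd c p).mpr hpc
  have heq : (a:ZMod p)^2 + 3*(b:ZMod p)^2 = 0 := by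
    have h' := congrArg (fun z : ℤ => (z : ZMod p)) h
    push_cast at h'
    rw [h', hc0]
    ring
  set m : ZMod p := (a:ZMod p) * (b:ZMod p)⁻¹ with hm
  have hmsq : m^2 = -3 := by
    have hinv : (b:ZMod p) * (b:ZMod p)⁻¹ = 1 := ZMod.mul_inv_of_unit _ (Ne.isUnit hbne)
    have : m^2 * (b:ZMod p)^2 = (-3) * (b:ZMod p)^2 := by
      have hma : m * (b:ZMod p) = (a:ZMod p) := by
        rw [hm]; field_simp
      calc m^2 * (b:ZMod p)^2 = (m * (b:ZMod p))^2 := by ring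
        _ = (a:ZMod p)^2 := by rw [hma]
        _ = (-3) * (b:ZMod p)^2 := by linear_combination heq
    exact mul_right_cancel₀ (pow_ne_zero 2 hbne) this
  -- lift to an integer M with p ∣ M² + 3
  set M : ℤ := (m.val : ℤ) with hM
  have hMcast : ((M : ℤ) : ZMod p) = m := by
    simp [hM, ZMod.natCast_val, ZMod.cast_id]
  have hdvd3 : (p:ℤ) ∣ M^2 + 3 := by
    rw [← ZMod.intCast_zmod_eq_zero_iff_dvd]
    push_cast
    rw [hMcast, hmsq]
    ring
  -- reduce M to a small representative
  have hppos : (0:ℤ) < p := by exact_mod_cast hp.pos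
  obtain ⟨M', hdM, hb1, hb2⟩ := small_rep (p:ℤ) hppos M
  have hpodd : (p:ℤ) = 2*((p:ℤ)/2) + 1 := by omega
  have hbound : 4*M'^2 ≤ ((p:ℤ) - 1)^2 := by nlinarith
  have hdvd3' : (p:ℤ) ∣ M'^2 + 3 := by
    have he : M'^2 + 3 = (M^2 + 3) - (M - M')*(M + M') := by ring
    rw [he]
    exact dvd_sub hdvd3 (hdM.mul_right _)
  obtain ⟨k, hk⟩ := hdvd3'
  have hk0 : 0 < k := by nlinarith [sq_nonneg M']
  have hkp : k < (p:ℤ) := by nlinarith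
  have hkt : ((k.toNat : ℤ)) = k := Int.toNat_of_nonneg (le_of_lt hk0)
  refine descent p hp hodd k.toNat (by omega) (by omega) M' 1 ?_
  rw [hkt]
  push_cast
  linarith [hk]
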